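/- arXiv:1108.5533 — 2 statements merged into one kernel-verified Lean document; each statement's English description precedes it below -/
import Mathlib

section
/- Assume X satisfies UDP(S₀, κ₀, Δ) with 0 < κ₀ < 1/2, ‖X^⊤ε‖_∞ ≤ λ_n⁰, and λ_ℓ > λ_n⁰/(1−2κ₀). Let β^ℓ be a lasso minimizer for y = Xβ* + ε. Then for every s ≤ S₀ and subset S with |S| = s: ‖Xβ^ℓ − Xβ*‖₂ ≤ 4λ_ℓ Δ√s + ‖β*_{S^c}‖₁/(Δ√s). -/
open Finset Matrix

/-- The ℓ¹ norm of a vector. -/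
noncomputable def l1 {p : ℕ} (v : Fin p → ℝ) : ℝ := ∑ i, |v i|

/-- The ℓ² norm of a vector. -/
noncomputable def l2 {n : ℕ} (v : Fin n → ℝ) : ℝ := Real.sqrt (∑ i, (v i) ^ 2)

/-- Restriction of a vector to a set of coordinates (zero elsewhere). -/
def restr {p : ℕ} (v : Fin p → ℝ) (S : Finset (Fin p)) : Fin p → ℝ :=
  fun i => if i ∈ S then v i else 0

/-- The Universal Distortion Property UDP(S₀, κ₀, Δ). -/
def UDP {n p : ℕ} (X : Matrix (Fin n) (Fin p) ℝ) (S₀ κ₀ Δ : ℝ) : Prop :=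
  ∀ γ : Fin p → ℝ, ∀ s : ℕ, 1 ≤ s → (s : ℝ) ≤ S₀ →
    ∀ S : Finset (Fin p), S.card = s →
      l1 (restr γ S) ≤ Δ * Real.sqrt s * l2 (X.mulVec γ) + κ₀ * l1 γ

lemma l1_restr_eq {p : ℕ} (v : Fin p → ℝ) (S : Finset (Fin p)) :
    l1 (restr v S) = ∑ i ∈ S, |v i| := by
  unfold l1 restr
  simp only [apply_ite abs, abs_zero]
  rw [Finset.sum_ite_mem, Finset.univ_inter]

lemma l1_split {p : ℕ} (v : Fin p → ℝ) (S : Finset (Fin p)) :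
    l1 v = ∑ i ∈ S, |v i| + ∑ i ∈ Sᶜ, |v i| := by
  unfold l1
  rw [Finset.sum_add_sum_compl]

lemma l1_nonneg {p : ℕ} (v : Fin p → ℝ) : 0 ≤ l1 v :=
  Finset.sum_nonneg fun i _ => abs_nonneg _

set_option maxHeartbeats 1000000 in
/-- Oracle inequality in prediction error for the lasso under UDP (de Castro, Thm 2.2). -/
theorem stmt_5 (n p : ℕ) (X : Matrix (Fin n) (Fin p) ℝ)
    (S₀ κ₀ Δ : ℝ) (hκ₀ : 0 < κ₀ ∧ κ₀ < 1/2) (hΔ : 0 < Δ) (hudp : UDP X S₀ κ₀ Δ)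
    (βstar βl : Fin p → ℝ) (ε y : Fin n → ℝ) (lam lam0 : ℝ)
    (hy : y = X.mulVec βstar + ε)
    (hnoise : ∀ j, |Xᵀ.mulVec ε j| ≤ lam0) (hlam0 : 0 ≤ lam0)
    (hlam : lam > lam0 / (1 - 2 * κ₀))
    (hmin : ∀ β : Fin p → ℝ,
      (1/2) * (∑ i, (X.mulVec βl i - y i) ^ 2) + lam * l1 βl
        ≤ (1/2) * (∑ i, (X.mulVec β i - y i) ^ 2) + lam * l1 β) :
    ∀ s : ℕ, 1 ≤ s → (s : ℝ) ≤ S₀ → ∀ S : Finset (Fin p), S.card = s →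
      l2 (X.mulVec βl - X.mulVec βstar)
        ≤ 4 * lam * Δ * Real.sqrt s + l1 (restr βstar Sᶜ) / (Δ * Real.sqrt s) := by
  intro s hs1 hs2 S hS
  obtain ⟨hκpos, hκhalf⟩ := hκ₀
  have h2κ : (0:ℝ) < 1 - 2 * κ₀ := by linarith
  have hlampos : 0 < lam := lt_of_le_of_lt (div_nonneg hlam0 h2κ.le) hlam
  have hlam0le : lam0 ≤ lam * (1 - 2 * κ₀) := by
    rw [gt_iff_lt, div_lt_iff₀ h2κ] at hlam
    linarith
  set h : Fin p → ℝ := βl - βstar with hh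
  have hXh : X.mulVec h = X.mulVec βl - X.mulVec βstar := Matrix.mulVec_sub X βl βstar
  set t : ℝ := l2 (X.mulVec h) with ht
  have htnn : 0 ≤ t := Real.sqrt_nonneg _
  have ht2 : t ^ 2 = ∑ i, (X.mulVec h i) ^ 2 :=
    Real.sq_sqrt (Finset.sum_nonneg fun i _ => sq_nonneg _)
  -- Step 1: basic inequality from minimality
  have hm := hmin βstar
  rw [hy] at hm
  have e1 : ∀ i, X.mulVec βl i - (X.mulVec βstar + ε) i = X.mulVec h i - ε i := by
    intro i
    have := congrFun hXh i
    simp only [Pi.sub_apply, Pi.add_apply] at this ⊢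
    linarith
  have e2 : ∑ i, (X.mulVec βl i - (X.mulVec βstar + ε) i) ^ 2
      = ∑ i, (X.mulVec h i) ^ 2 - 2 * ∑ i, X.mulVec h i * ε i + ∑ i, ε i ^ 2 := by
    have e1' : ∀ i, ((X.mulVec βl) i - (X.mulVec βstar + ε) i) ^ 2
        = (X.mulVec h i) ^ 2 - 2 * (X.mulVec h i * ε i) + ε i ^ 2 := by
      intro i; rw [e1 i]; ring
    simp_rw [e1', Finset.sum_add_distrib, Finset.sum_sub_distrib, ← Finset.mul_sum]
  have e3 : ∑ i, (X.mulVec βstar i - (X.mulVec βstar + ε) i) ^ 2 = ∑ i, ε i ^ 2 := by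
    apply Finset.sum_congr rfl
    intro i _
    simp only [Pi.add_apply]
    ring
  rw [e2, e3] at hm
  have step1 : (1/2) * ∑ i, (X.mulVec h i) ^ 2
      ≤ (∑ i, X.mulVec h i * ε i) + lam * (l1 βstar - l1 βl) := by
    linarith [hm]
  -- Step 2: bound the inner product
  have hdot : ∑ i, X.mulVec h i * ε i = ∑ j, Xᵀ.mulVec ε j * h j := by
    have h1 : ε ⬝ᵥ X.mulVec h = X.vecMul ε ⬝ᵥ h := Matrix.dotProduct_mulVec ε X h
    have h2 : Xᵀ.mulVec ε = X.vecMul ε := Matrix.mulVec_transpose X ε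
    rw [h2]
    simpa [dotProduct, mul_comm] using h1
  have hdotle : ∑ i, X.mulVec h i * ε i ≤ lam0 * l1 h := by
    rw [hdot]
    unfold l1
    rw [Finset.mul_sum]
    apply Finset.sum_le_sum
    intro j _
    calc Xᵀ.mulVec ε j * h j ≤ |Xᵀ.mulVec ε j * h j| := le_abs_self _
      _ = |Xᵀ.mulVec ε j| * |h j| := abs_mul _ _
      _ ≤ lam0 * |h j| := mul_le_mul_of_nonneg_right (hnoise j) (abs_nonneg _)
  -- quantities
  set a : ℝ := l1 (restr h S) with ha
  set b : ℝ := l1 (restr h Sᶜ) with hb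
  set Bv : ℝ := l1 (restr βstar Sᶜ) with hBv
  have hann : 0 ≤ a := l1_nonneg _
  have hbnn : 0 ≤ b := l1_nonneg _
  have hBnn : 0 ≤ Bv := l1_nonneg _
  have hab : l1 h = a + b := by
    rw [ha, hb, l1_restr_eq, l1_restr_eq, l1_split h S]
  -- Step 3: l1 βstar - l1 βl ≤ a - b + 2 Bv
  have step3 : l1 βstar - l1 βl ≤ a - b + 2 * Bv := by
    rw [ha, hb, hBv, l1_restr_eq, l1_restr_eq, l1_restr_eq,
      l1_split βstar S, l1_split βl S]
    have hS1 : ∑ i ∈ S, |βstar i| - ∑ i ∈ S, |βl i| ≤ ∑ i ∈ S, |h i| := by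
      rw [← Finset.sum_sub_distrib]
      apply Finset.sum_le_sum
      intro i _
      have : h i = βl i - βstar i := rfl
      calc |βstar i| - |βl i| ≤ |βstar i - βl i| := abs_sub_abs_le_abs_sub _ _
        _ = |h i| := by rw [this, abs_sub_comm]
    have hS2 : ∑ i ∈ Sᶜ, |βstar i| - ∑ i ∈ Sᶜ, |βl i|
        ≤ 2 * ∑ i ∈ Sᶜ, |βstar i| - ∑ i ∈ Sᶜ, |h i| := by
      have : ∑ i ∈ Sᶜ, |h i| ≤ ∑ i ∈ Sᶜ, |βstar i| + ∑ i ∈ Sᶜ, |βl i| := by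
        rw [← Finset.sum_add_distrib]
        apply Finset.sum_le_sum
        intro i _
        have hrfl : h i = βl i - βstar i := rfl
        calc |h i| = |βl i - βstar i| := by rw [hrfl]
          _ ≤ |βl i| + |βstar i| := abs_sub _ _
          _ = |βstar i| + |βl i| := by ring
      linarith
    linarith
  -- UDP
  have hUDPh : a ≤ Δ * Real.sqrt s * t + κ₀ * (a + b) := by
    have := hudp h s hs1 hs2 S hS
    rw [hab] at this
    exact this
  set D : ℝ := Δ * Real.sqrt s with hD
  have hsqrtpos : 0 < Real.sqrt s := by
    apply Real.sqrt_pos.2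
    exact_mod_cast Nat.pos_of_ne_zero (by omega)
  have hDpos : 0 < D := mul_pos hΔ hsqrtpos
  -- master inequality
  have master : t ^ 2 / 2 ≤ (lam0 + lam) * a + (lam0 - lam) * b + 2 * lam * Bv := by
    have := step1
    rw [ht2]
    have h1 : (1/2) * ∑ i, (X.mulVec h i) ^ 2
        ≤ lam0 * (a + b) + lam * (a - b + 2 * Bv) := by
      calc (1/2) * ∑ i, (X.mulVec h i) ^ 2
          ≤ (∑ i, X.mulVec h i * ε i) + lam * (l1 βstar - l1 βl) := step1
        _ ≤ lam0 * l1 h + lam * (a - b + 2 * Bv) := by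
            have := mul_le_mul_of_nonneg_left step3 hlampos.le
            linarith
        _ = lam0 * (a + b) + lam * (a - b + 2 * Bv) := by rw [hab]
    linarith
  -- combine
  have key : t ^ 2 ≤ 4 * lam * D * t + 4 * lam * Bv := by
    have h1 : (1 - κ₀) * a ≤ D * t + κ₀ * b := by
      rw [hD]; nlinarith [hUDPh]
    nlinarith [mul_le_mul_of_nonneg_left h1 (by linarith : (0:ℝ) ≤ lam0 + lam),
      mul_nonneg (by nlinarith : (0:ℝ) ≤ lam - lam0 - 2 * lam * κ₀) hbnn,
      mul_nonneg (by nlinarith : (0:ℝ) ≤ 2 * lam * (1 - κ₀) - (lam0 + lam)) htnn,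
      mul_pos hDpos hlampos, mul_nonneg hlampos.le hBnn]
  have final : t * D ≤ 4 * lam * D * D + Bv := by
    nlinarith [sq_nonneg (t - 4 * lam * D), key]
  have hgoal : t ≤ 4 * lam * D + Bv / D := by
    rw [← sub_nonneg]
    have : 4 * lam * D + Bv / D - t = (4 * lam * D * D + Bv - t * D) / D := by
      field_simp
    rw [this]
    exact div_nonneg (by linarith) hDpos.le
  calc l2 (X.mulVec βl - X.mulVec βstar) = t := by rw [ht, hXh]
    _ ≤ 4 * lam * D + Bv / D := hgoal
    _ = 4 * lam * Δ * Real.sqrt s + Bv / (Δ * Real.sqrt s) := by rw [hD]; ring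
end

section
/- Suppose X satisfies RIP(θ_{5S}) with θ_{5S} < √2 − 1. Let κ₀ satisfy [1 + 2((1−θ_{5S})/(1+θ_{5S}))^{1/2}]^{-1} < κ₀ < 1/2 and Δ ≥ [√(1−θ_{5S}) + ((κ₀−1)/(2κ₀))√(1+θ_{5S})]^{-1}. Then X satisfies UDP(S, κ₀, Δ): for all γ ∈ ℝ^p, s ≤ S, and T₀ with |T₀| = s, ‖γ_{T₀}‖₁ ≤ Δ√s‖Xγ‖₂ + κ₀‖γ‖₁. -/
open Finset Matrix

lemma l1_restr {p : ℕ} (γ : Fin p → ℝ) (B : Finset (Fin p)) :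
    l1 (restr γ B) = ∑ i ∈ B, |γ i| := by
  unfold l1 restr
  rw [← Finset.univ_inter B, ← Finset.sum_ite_mem]
  exact Finset.sum_congr rfl fun i _ => by by_cases h : i ∈ B <;> simp [h]

lemma sq_restr {p : ℕ} (γ : Fin p → ℝ) (B : Finset (Fin p)) :
    ∑ i, (restr γ B i) ^ 2 = ∑ i ∈ B, γ i ^ 2 := by
  unfold restr
  rw [← Finset.univ_inter B, ← Finset.sum_ite_mem]
  exact Finset.sum_congr rfl fun i _ => by by_cases h : i ∈ B <;> simp [h]


lemma l2_add_le {n : ℕ} (u v : Fin n → ℝ) : l2 (u + v) ≤ l2 u + l2 v := by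
  have := norm_add_le ((WithLp.equiv 2 (Fin n → ℝ)).symm u) ((WithLp.equiv 2 (Fin n → ℝ)).symm v)
  simpa [EuclideanSpace.norm_eq, Real.norm_eq_abs, sq_abs, l2] using this

lemma exists_topk {p : ℕ} (γ : Fin p → ℝ) :
    ∀ (k : ℕ) (B : Finset (Fin p)), k ≤ B.card →
    ∃ T, T ⊆ B ∧ T.card = k ∧ ∀ t ∈ T, ∀ b ∈ B \ T, |γ b| ≤ |γ t| := by
  intro k
  induction k with
  | zero => exact fun B _ => ⟨∅, Finset.empty_subset _, rfl, by simp⟩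
  | succ k ih =>
    intro B hB
    have hne : B.Nonempty := Finset.card_pos.mp (lt_of_lt_of_le (Nat.succ_pos k) hB)
    obtain ⟨t₀, ht₀B, ht₀max⟩ := Finset.exists_max_image B (fun i => |γ i|) hne
    have hcard : k ≤ (B.erase t₀).card := by
      rw [Finset.card_erase_of_mem ht₀B]; omega
    obtain ⟨T', hT'sub, hT'card, hT'ord⟩ := ih (B.erase t₀) hcard
    have ht₀T' : t₀ ∉ T' := fun h => (Finset.mem_erase.mp (hT'sub h)).1 rfl
    refine ⟨insert t₀ T', ?_, ?_, ?_⟩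
    · exact Finset.insert_subset ht₀B (hT'sub.trans (Finset.erase_subset _ _))
    · rw [Finset.card_insert_of_notMem ht₀T', hT'card]
    · intro t ht b hb
      rw [Finset.mem_insert] at ht
      rw [Finset.mem_sdiff, Finset.mem_insert] at hb
      rcases ht with rfl | ht
      · exact ht₀max b hb.1
      · exact hT'ord t ht b (Finset.mem_sdiff.mpr
          ⟨Finset.mem_erase.mpr ⟨fun h => hb.2 (Or.inl h), hb.1⟩, fun h => hb.2 (Or.inr h)⟩)

lemma restr_support_card {p : ℕ} (γ : Fin p → ℝ) (B : Finset (Fin p)) :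
    (Finset.univ.filter fun i => restr γ B i ≠ 0).card ≤ B.card := by
  apply Finset.card_le_card
  intro i hi
  rw [Finset.mem_filter] at hi
  by_contra h
  exact hi.2 (by simp [restr, h])

lemma restr_split {p : ℕ} (γ : Fin p → ℝ) {T B : Finset (Fin p)} (hTB : T ⊆ B) :
    restr γ B = restr γ T + restr γ (B \ T) := by
  funext i
  simp only [restr, Pi.add_apply, Finset.mem_sdiff]
  by_cases hT : i ∈ T
  · simp [hT, hTB hT]
  · by_cases hB : i ∈ B <;> simp [hT, hB]

section
variable {n p : ℕ} (X : Matrix (Fin n) (Fin p) ℝ) (θ : ℝ) (S : ℕ)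

lemma l2_mulVec_le (hθ : 0 ≤ θ)
    (hRIPu : ∀ v : Fin p → ℝ, (Finset.univ.filter fun i => v i ≠ 0).card ≤ 5 * S →
      (∑ i, (X.mulVec v i) ^ 2) ≤ (1 + θ) * ∑ i, v i ^ 2)
    (v : Fin p → ℝ) (hv : (Finset.univ.filter fun i => v i ≠ 0).card ≤ 5 * S) :
    l2 (X.mulVec v) ≤ Real.sqrt (1 + θ) * l2 v := by
  unfold l2
  rw [← Real.sqrt_mul (by linarith)]
  exact Real.sqrt_le_sqrt (hRIPu v hv)

lemma l2_restr_flat (γ : Fin p → ℝ) {B : Finset (Fin p)} {k : ℕ} {M : ℝ} (hM : 0 ≤ M)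
    (hcard : B.card ≤ k) (hflat : ∀ j ∈ B, |γ j| ≤ M) :
    l2 (restr γ B) ≤ Real.sqrt k * M := by
  unfold l2
  rw [sq_restr]
  have h1 : ∑ i ∈ B, γ i ^ 2 ≤ (k : ℝ) * M ^ 2 := by
    calc ∑ i ∈ B, γ i ^ 2 ≤ ∑ _i ∈ B, M ^ 2 := by
          apply Finset.sum_le_sum
          intro i hi
          have := hflat i hi
          nlinarith [abs_nonneg (γ i), sq_abs (γ i)]
      _ = B.card * M ^ 2 := by rw [Finset.sum_const, nsmul_eq_mul]
      _ ≤ (k : ℝ) * M ^ 2 := by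
          apply mul_le_mul_of_nonneg_right _ (sq_nonneg M)
          exact_mod_cast hcard
  calc Real.sqrt (∑ i ∈ B, γ i ^ 2) ≤ Real.sqrt ((k : ℝ) * M ^ 2) := Real.sqrt_le_sqrt h1
    _ = Real.sqrt k * M := by
        rw [Real.sqrt_mul (Nat.cast_nonneg k), Real.sqrt_sq hM]

lemma flat_tail (γ : Fin p → ℝ) (k : ℕ) (hk : 1 ≤ k) (hk5 : k ≤ 5 * S) (hθ : 0 ≤ θ)
    (hRIPu : ∀ v : Fin p → ℝ, (Finset.univ.filter fun i => v i ≠ 0).card ≤ 5 * S →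
      (∑ i, (X.mulVec v i) ^ 2) ≤ (1 + θ) * ∑ i, v i ^ 2) :
    ∀ (N : ℕ) (B : Finset (Fin p)), B.card ≤ N → ∀ M : ℝ, 0 ≤ M → (∀ j ∈ B, |γ j| ≤ M) →
    l2 (X.mulVec (restr γ B)) ≤
      Real.sqrt (1 + θ) * (Real.sqrt k * M + l1 (restr γ B) / Real.sqrt k) := by
  have hsk : (0:ℝ) < Real.sqrt k := Real.sqrt_pos.mpr (by exact_mod_cast hk)
  have hsq1θ : (0:ℝ) ≤ Real.sqrt (1 + θ) := Real.sqrt_nonneg _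
  have hsmall : ∀ (B : Finset (Fin p)), B.card ≤ k → ∀ M : ℝ, 0 ≤ M →
      (∀ j ∈ B, |γ j| ≤ M) →
      l2 (X.mulVec (restr γ B)) ≤
        Real.sqrt (1 + θ) * (Real.sqrt k * M + l1 (restr γ B) / Real.sqrt k) := by
    intro B hBk M hM hflat
    have h1 : l2 (X.mulVec (restr γ B)) ≤ Real.sqrt (1 + θ) * l2 (restr γ B) :=
      l2_mulVec_le X θ S hθ hRIPu _ ((restr_support_card γ B).trans (hBk.trans hk5))
    have h2 : l2 (restr γ B) ≤ Real.sqrt k * M := l2_restr_flat γ hM hBk hflat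
    have h3 : 0 ≤ l1 (restr γ B) / Real.sqrt k := by
      apply div_nonneg _ hsk.le
      rw [l1_restr]; exact Finset.sum_nonneg fun _ _ => abs_nonneg _
    nlinarith
  intro N
  induction N with
  | zero =>
    intro B hB M hM hflat
    exact hsmall B (le_trans hB (Nat.zero_le k)) M hM hflat
  | succ N ih =>
    intro B hB M hM hflat
    by_cases hBk : B.card ≤ k
    · exact hsmall B hBk M hM hflat
    push_neg at hBk
    obtain ⟨T, hTB, hTcard, hTord⟩ := exists_topk γ k B hBk.le
    set R := B \ T with hRdef
    have hRcard : R.card ≤ N := by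
      have := Finset.card_sdiff_of_subset hTB
      rw [hRdef, this, hTcard]; omega
    -- new bound for entries in R
    set M' := (∑ t ∈ T, |γ t|) / k with hM'def
    have hTl1nonneg : 0 ≤ ∑ t ∈ T, |γ t| := Finset.sum_nonneg fun _ _ => abs_nonneg _
    have hM'nonneg : 0 ≤ M' := div_nonneg hTl1nonneg (Nat.cast_nonneg k)
    have hflatR : ∀ j ∈ R, |γ j| ≤ M' := by
      intro j hj
      have hle : ∀ t ∈ T, |γ j| ≤ |γ t| := fun t ht => hTord t ht j hj
      have := Finset.card_nsmul_le_sum T (fun t => |γ t|) (|γ j|) hle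
      rw [hTcard] at this
      rw [hM'def, le_div_iff₀ (by exact_mod_cast hk : (0:ℝ) < (k:ℝ))]
      calc |γ j| * k = (k : ℕ) • |γ j| := by rw [nsmul_eq_mul]; ring
        _ ≤ _ := this
    have hih := ih R hRcard M' hM'nonneg hflatR
    -- bound for T block
    have hT1 : l2 (X.mulVec (restr γ T)) ≤ Real.sqrt (1 + θ) * (Real.sqrt k * M) := by
      have h1 : l2 (X.mulVec (restr γ T)) ≤ Real.sqrt (1 + θ) * l2 (restr γ T) :=
        l2_mulVec_le X θ S hθ hRIPu _ (by
          calc _ ≤ T.card := restr_support_card γ T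
            _ ≤ 5 * S := by omega)
      have h2 : l2 (restr γ T) ≤ Real.sqrt k * M :=
        l2_restr_flat γ hM (by omega) (fun j hj => hflat j (hTB hj))
      nlinarith
    -- combine
    have hsplit : X.mulVec (restr γ B) = X.mulVec (restr γ T) + X.mulVec (restr γ R) := by
      rw [restr_split γ hTB, Matrix.mulVec_add]
    have htri : l2 (X.mulVec (restr γ B)) ≤
        l2 (X.mulVec (restr γ T)) + l2 (X.mulVec (restr γ R)) := by
      rw [hsplit]; exact l2_add_le _ _
    have hl1split : l1 (restr γ B) = (∑ t ∈ T, |γ t|) + l1 (restr γ R) := by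
      rw [l1_restr, l1_restr, hRdef, ← Finset.sum_sdiff hTB]; ring
    have hkey : Real.sqrt k * M' = (∑ t ∈ T, |γ t|) / Real.sqrt k := by
      have hkk : Real.sqrt k * Real.sqrt k = (k:ℝ) := Real.mul_self_sqrt (Nat.cast_nonneg k)
      have hkpos : (0:ℝ) < (k:ℝ) := by exact_mod_cast hk
      rw [hM'def]
      field_simp
      nlinarith [hkk]
    calc l2 (X.mulVec (restr γ B)) ≤ l2 (X.mulVec (restr γ T)) + l2 (X.mulVec (restr γ R)) := htri
      _ ≤ Real.sqrt (1 + θ) * (Real.sqrt k * M) +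
          Real.sqrt (1 + θ) * (Real.sqrt k * M' + l1 (restr γ R) / Real.sqrt k) := by
            exact add_le_add hT1 hih
      _ = Real.sqrt (1 + θ) * (Real.sqrt k * M + l1 (restr γ B) / Real.sqrt k) := by
            rw [hkey, hl1split, add_div]; ring

end

lemma sqrt_mul_div (c x : ℝ) (hx : 0 < x) :
    Real.sqrt x * (c / x) = c / Real.sqrt x := by
  have hs : (0:ℝ) < Real.sqrt x := Real.sqrt_pos.mpr hx
  have h : Real.sqrt x * Real.sqrt x = x := Real.mul_self_sqrt hx.le
  field_simp
  linear_combination c * h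

lemma l2_neg {n : ℕ} (v : Fin n → ℝ) : l2 (-v) = l2 v := by
  unfold l2; congr 1; exact Finset.sum_congr rfl fun i _ => by simp

set_option maxHeartbeats 1600000 in
/-- `RIP(θ_{5S})` with `θ_{5S} < √2 − 1` implies `UDP(S, κ₀, Δ)` for any admissible pair
`(κ₀, Δ)` (de Castro, Prop. 3.1). -/
theorem stmt_15 (n p : ℕ) (X : Matrix (Fin n) (Fin p) ℝ)
    (S : ℕ) (θ κ₀ Δ : ℝ) (hθ0 : 0 ≤ θ) (hθ : θ < Real.sqrt 2 - 1)
    (hRIP : ∀ γ : Fin p → ℝ, (Finset.univ.filter fun i => γ i ≠ 0).card ≤ 5 * S →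
      (1 - θ) * (∑ i, (γ i) ^ 2) ≤ (∑ i, (X.mulVec γ i) ^ 2) ∧
      (∑ i, (X.mulVec γ i) ^ 2) ≤ (1 + θ) * (∑ i, (γ i) ^ 2))
    (hκ₀ : (1 + 2 * Real.sqrt ((1 - θ) / (1 + θ)))⁻¹ < κ₀ ∧ κ₀ < 1/2)
    (hΔ : (Real.sqrt (1 - θ) + ((κ₀ - 1) / (2 * κ₀)) * Real.sqrt (1 + θ))⁻¹ ≤ Δ) :
    ∀ (γ : Fin p → ℝ) (s : ℕ), 1 ≤ s → s ≤ S → ∀ T₀ : Finset (Fin p), T₀.card = s →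
      l1 (restr γ T₀) ≤ Δ * Real.sqrt s * l2 (X.mulVec γ) + κ₀ * l1 γ := by
  intro γ s hs1 hsS T₀ hT₀
  -- basic numeric facts
  have hsqrt2 : Real.sqrt 2 < 2 := by
    nlinarith [Real.sq_sqrt (show (0:ℝ) ≤ 2 by norm_num), Real.sqrt_nonneg 2]
  have hθ1 : θ < 1 := by linarith
  set a := Real.sqrt (1 - θ) with ha_def
  set b := Real.sqrt (1 + θ) with hb_def
  have ha : 0 < a := Real.sqrt_pos.mpr (by linarith)
  have hb : 0 < b := Real.sqrt_pos.mpr (by linarith)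
  have haa : a * a = 1 - θ := Real.mul_self_sqrt (by linarith)
  have hbb : b * b = 1 + θ := Real.mul_self_sqrt (by linarith)
  have hRIPu : ∀ v : Fin p → ℝ, (Finset.univ.filter fun i => v i ≠ 0).card ≤ 5 * S →
      (∑ i, (X.mulVec v i) ^ 2) ≤ (1 + θ) * ∑ i, v i ^ 2 := fun v hv => (hRIP v hv).2
  have hS1 : 1 ≤ S := le_trans hs1 hsS
  -- κ₀ facts
  have hr : Real.sqrt ((1 - θ) / (1 + θ)) = a / b := by
    exact Real.sqrt_div (by linarith) _
  have hκ1 : (1 + 2 * (a / b))⁻¹ < κ₀ := by rw [← hr]; exact hκ₀.1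
  have hpos1 : (0:ℝ) < 1 + 2 * (a / b) := by positivity
  have hκpos : 0 < κ₀ := lt_trans (by positivity) hκ1
  have hκmul : 1 < κ₀ * (1 + 2 * (a / b)) := by
    have hc := mul_inv_cancel₀ (ne_of_gt hpos1)
    nlinarith
  have hba : b * (a / b) = a := by field_simp
  have hkey : b < κ₀ * (b + 2 * a) := by nlinarith
  -- sqrt s facts
  have hss : (0:ℝ) < Real.sqrt s := Real.sqrt_pos.mpr (by exact_mod_cast hs1)
  have hs4 : Real.sqrt ((4 * s : ℕ) : ℝ) = 2 * Real.sqrt s := by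
    push_cast
    rw [show ((4:ℝ) * s) = 2 ^ 2 * s by ring, Real.sqrt_mul (by positivity),
      Real.sqrt_sq (by norm_num)]
  -- choose the top block T of T₀ᶜ
  set k := 4 * s with hk_def
  have hk1 : 1 ≤ k := by omega
  have hk5 : k ≤ 5 * S := by omega
  set kc := min k T₀ᶜ.card with hkc_def
  obtain ⟨T, hTB, hTcard, hTord⟩ := exists_topk γ kc T₀ᶜ (min_le_right _ _)
  set R := T₀ᶜ \ T with hR_def
  -- tail bound
  have hl1c_nonneg : 0 ≤ l1 (restr γ T₀ᶜ) := by
    rw [l1_restr]; exact Finset.sum_nonneg fun _ _ => abs_nonneg _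
  have hR_bound : l2 (X.mulVec (restr γ R)) ≤ b * (l1 (restr γ T₀ᶜ) / (2 * Real.sqrt s)) := by
    by_cases hcase : T₀ᶜ.card ≤ k
    · -- R is empty
      have hTeq : T = T₀ᶜ := Finset.eq_of_subset_of_card_le hTB (by omega)
      have hRempty : R = ∅ := by rw [hR_def, hTeq, Finset.sdiff_self]
      have : restr γ R = 0 := by funext i; simp [restr, hRempty]
      rw [this, Matrix.mulVec_zero]
      have : l2 (0 : Fin n → ℝ) = 0 := by simp [l2]
      rw [this]
      positivity
    · push_neg at hcase
      have hkck : kc = k := by omega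
      have hTcard' : T.card = k := by rw [hTcard, hkck]
      set M' := (∑ t ∈ T, |γ t|) / k with hM'_def
      have hTl1 : 0 ≤ ∑ t ∈ T, |γ t| := Finset.sum_nonneg fun _ _ => abs_nonneg _
      have hM'nonneg : 0 ≤ M' := div_nonneg hTl1 (by positivity)
      have hflatR : ∀ j ∈ R, |γ j| ≤ M' := by
        intro j hj
        have hle : ∀ t ∈ T, |γ j| ≤ |γ t| := fun t ht => hTord t ht j hj
        have h2 := Finset.card_nsmul_le_sum T (fun t => |γ t|) (|γ j|) hle
        rw [hTcard'] at h2
        rw [hM'_def, le_div_iff₀ (by exact_mod_cast hk1 : (0:ℝ) < (k:ℝ))]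
        calc |γ j| * k = (k : ℕ) • |γ j| := by rw [nsmul_eq_mul]; ring
          _ ≤ _ := h2
      have hft := flat_tail X θ S γ k hk1 hk5 hθ0 hRIPu R.card R le_rfl M' hM'nonneg hflatR
      have hsk : (0:ℝ) < Real.sqrt k := Real.sqrt_pos.mpr (by exact_mod_cast hk1)
      have hkk : Real.sqrt k * Real.sqrt k = (k : ℝ) := Real.mul_self_sqrt (by positivity)
      have hkeyM : Real.sqrt k * M' = (∑ t ∈ T, |γ t|) / Real.sqrt k := by
        have hkpos : (0:ℝ) < (k:ℝ) := by exact_mod_cast hk1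
        rw [hM'_def]; exact sqrt_mul_div _ _ hkpos
      have hl1split : l1 (restr γ T₀ᶜ) = (∑ t ∈ T, |γ t|) + l1 (restr γ R) := by
        rw [l1_restr, l1_restr, hR_def, ← Finset.sum_sdiff hTB]; ring
      calc l2 (X.mulVec (restr γ R)) ≤
            b * (Real.sqrt k * M' + l1 (restr γ R) / Real.sqrt k) := hft
        _ = b * (l1 (restr γ T₀ᶜ) / Real.sqrt k) := by
            rw [hkeyM, hl1split, add_div]
        _ = b * (l1 (restr γ T₀ᶜ) / (2 * Real.sqrt s)) := by
            rw [show Real.sqrt (k:ℝ) = 2 * Real.sqrt s from hs4]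
  -- the set A = T₀ ∪ T
  set A := T₀ ∪ T with hA_def
  have hAcard : A.card ≤ 5 * S := by
    calc A.card ≤ T₀.card + T.card := Finset.card_union_le _ _
      _ ≤ s + k := by rw [hT₀, hTcard]; omega
      _ ≤ 5 * S := by omega
  -- RIP lower bound on A
  have hlow : a * l2 (restr γ A) ≤ l2 (X.mulVec (restr γ A)) := by
    have h1 := (hRIP (restr γ A) ((restr_support_card γ A).trans hAcard)).1
    unfold l2
    calc a * Real.sqrt (∑ i, restr γ A i ^ 2)
        = Real.sqrt ((1 - θ) * ∑ i, restr γ A i ^ 2) := by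
          rw [Real.sqrt_mul (by linarith)]
      _ ≤ _ := Real.sqrt_le_sqrt h1
  -- decomposition γ = restr γ A + restr γ R
  have hdec : γ = restr γ A + restr γ R := by
    funext i
    simp only [restr, Pi.add_apply, hA_def, hR_def, Finset.mem_union, Finset.mem_sdiff,
      Finset.mem_compl]
    by_cases h0 : i ∈ T₀
    · simp [h0]
    · by_cases h1 : i ∈ T <;> simp [h0, h1]
  have htriA : l2 (X.mulVec (restr γ A)) ≤ l2 (X.mulVec γ) + l2 (X.mulVec (restr γ R)) := by
    have hdec2 : X.mulVec γ = X.mulVec (restr γ A) + X.mulVec (restr γ R) := by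
      conv_lhs => rw [hdec]
      rw [Matrix.mulVec_add]
    have h1 : X.mulVec (restr γ A) = X.mulVec γ + -(X.mulVec (restr γ R)) := by
      rw [hdec2]; funext i; simp
    rw [h1]
    calc l2 (X.mulVec γ + -(X.mulVec (restr γ R)))
        ≤ l2 (X.mulVec γ) + l2 (-(X.mulVec (restr γ R))) := l2_add_le _ _
      _ = _ := by rw [l2_neg]
  -- Cauchy-Schwarz
  have hCS : l1 (restr γ T₀) ≤ Real.sqrt s * l2 (restr γ T₀) := by
    have h1 : (∑ i ∈ T₀, |γ i|) ^ 2 ≤ T₀.card * ∑ i ∈ T₀, |γ i| ^ 2 :=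
      sq_sum_le_card_mul_sum_sq
    have h2 : ∑ i ∈ T₀, |γ i| ^ 2 = ∑ i ∈ T₀, γ i ^ 2 :=
      Finset.sum_congr rfl fun i _ => sq_abs _
    rw [l1_restr]
    have h3 : 0 ≤ ∑ i ∈ T₀, |γ i| := Finset.sum_nonneg fun _ _ => abs_nonneg _
    calc ∑ i ∈ T₀, |γ i| = Real.sqrt ((∑ i ∈ T₀, |γ i|) ^ 2) := (Real.sqrt_sq h3).symm
      _ ≤ Real.sqrt ((s : ℝ) * ∑ i ∈ T₀, γ i ^ 2) := by
          apply Real.sqrt_le_sqrt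
          rw [← h2]; rw [hT₀] at h1; exact_mod_cast h1
      _ = Real.sqrt s * l2 (restr γ T₀) := by
          rw [Real.sqrt_mul (by positivity)]
          unfold l2; rw [sq_restr]
  have hT₀A : l2 (restr γ T₀) ≤ l2 (restr γ A) := by
    unfold l2
    apply Real.sqrt_le_sqrt
    rw [sq_restr, sq_restr]
    exact Finset.sum_le_sum_of_subset_of_nonneg Finset.subset_union_left
      fun i _ _ => sq_nonneg _
  -- l1 split over T₀ and its complement
  have hl1tot : l1 γ = l1 (restr γ T₀) + l1 (restr γ T₀ᶜ) := by
    rw [l1_restr, l1_restr]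
    exact (Finset.sum_add_sum_compl T₀ fun i => |γ i|).symm
  -- put everything together
  set t := l1 (restr γ T₀) with ht_def
  set w := l2 (X.mulVec γ) with hw_def
  set L := l1 γ with hL_def
  have hw0 : 0 ≤ w := Real.sqrt_nonneg _
  have hL0 : 0 ≤ L := Finset.sum_nonneg fun _ _ => abs_nonneg _
  have hchain : a * t ≤ Real.sqrt s * w + (b / 2) * (L - t) := by
    have hc : l1 (restr γ T₀ᶜ) = L - t := by linarith [hl1tot]
    have h1 : t ≤ Real.sqrt s * l2 (restr γ A) :=
      hCS.trans (mul_le_mul_of_nonneg_left hT₀A hss.le)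
    have h1' : a * t ≤ Real.sqrt s * (a * l2 (restr γ A)) := by
      calc a * t ≤ a * (Real.sqrt s * l2 (restr γ A)) := mul_le_mul_of_nonneg_left h1 ha.le
        _ = Real.sqrt s * (a * l2 (restr γ A)) := by ring
    have h3 : a * l2 (restr γ A) ≤ w + b * ((L - t) / (2 * Real.sqrt s)) := by
      rw [← hc]
      exact hlow.trans (htriA.trans (by linarith [hR_bound]))
    have h3' : Real.sqrt s * (a * l2 (restr γ A)) ≤
        Real.sqrt s * (w + b * ((L - t) / (2 * Real.sqrt s))) :=
      mul_le_mul_of_nonneg_left h3 hss.le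
    have h4 : Real.sqrt s * (w + b * ((L - t) / (2 * Real.sqrt s))) =
        Real.sqrt s * w + (b / 2) * (L - t) := by
      have hne : Real.sqrt (s:ℝ) ≠ 0 := ne_of_gt hss
      field_simp
    linarith [h1', h3', h4.le, h4.ge]
  obtain ⟨d₁, hd1_def⟩ : ∃ d₁ : ℝ, d₁ = a + b / 2 := ⟨_, rfl⟩
  have hd1 : 0 < d₁ := by rw [hd1_def]; positivity
  have hfin : d₁ * t ≤ Real.sqrt s * w + (b / 2) * L := by
    rw [hd1_def]; rw [hd1_def] at *
    have hbt : 0 ≤ b * t := by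
      have : 0 ≤ t := by rw [ht_def, l1_restr]; exact Finset.sum_nonneg fun _ _ => abs_nonneg _
      positivity
    nlinarith [hchain]
  -- comparison of constants
  have hκd : b / 2 < κ₀ * d₁ := by rw [hd1_def]; nlinarith [hkey]
  have hd2 : 0 < a + (κ₀ - 1) / (2 * κ₀) * b := by
    have h10 : 0 < 2 * κ₀ * a + (κ₀ - 1) * b := by nlinarith [hkey]
    have h11 : a + (κ₀ - 1) / (2 * κ₀) * b = (2 * κ₀ * a + (κ₀ - 1) * b) / (2 * κ₀) := by
      field_simp
    rw [h11]
    exact div_pos h10 (by positivity)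
  have hΔd : 1 ≤ Δ * d₁ := by
    have hd21 : a + (κ₀ - 1) / (2 * κ₀) * b ≤ d₁ := by
      rw [hd1_def]
      have : (κ₀ - 1) / (2 * κ₀) ≤ 1 / 2 := by
        rw [div_le_div_iff₀ (by positivity) (by norm_num)]
        nlinarith
      nlinarith
    have hΔpos : (a + (κ₀ - 1) / (2 * κ₀) * b)⁻¹ ≤ Δ := hΔ
    have h5 : 0 < (a + (κ₀ - 1) / (2 * κ₀) * b)⁻¹ := by positivity
    have hΔ0 : 0 < Δ := lt_of_lt_of_le h5 hΔpos
    have h6 := mul_inv_cancel₀ (ne_of_gt hd2)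
    have h7 : 1 ≤ (a + (κ₀ - 1) / (2 * κ₀) * b) * Δ := by
      calc (1:ℝ) = (a + (κ₀ - 1) / (2 * κ₀) * b) * (a + (κ₀ - 1) / (2 * κ₀) * b)⁻¹ := h6.symm
        _ ≤ _ := mul_le_mul_of_nonneg_left hΔpos hd2.le
    have h8 := mul_le_mul_of_nonneg_right hd21 hΔ0.le
    nlinarith [h7, h8]
  -- finish
  have e1 : Real.sqrt s * w ≤ d₁ * (Δ * (Real.sqrt s * w)) := by
    have h7 : 0 ≤ Real.sqrt s * w := mul_nonneg hss.le hw0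
    have h8 := mul_le_mul_of_nonneg_right hΔd h7
    linarith [h8]
  have e2 : (b / 2) * L ≤ d₁ * (κ₀ * L) := by
    have h9 := mul_le_mul_of_nonneg_right hκd.le hL0
    linarith [h9]
  have e3 : d₁ * t ≤ d₁ * (Δ * Real.sqrt s * w + κ₀ * L) := by
    have h10 : d₁ * (Δ * Real.sqrt s * w + κ₀ * L) =
        d₁ * (Δ * (Real.sqrt s * w)) + d₁ * (κ₀ * L) := by ring
    rw [h10]
    linarith [hfin, e1, e2]
  have e4 := (mul_le_mul_iff_right₀ hd1).mp e3
  linarith [e4]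
end
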